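/- Let B > 0, β ∈ [0,1), and let c_1, …, c_n be item costs with 0 < c_i ≤ B for all i, with k_i = ⌊B/c_i⌋ and d(S) = Σ_{i∈S} 1/k_i. Suppose the costs are β-regular, i.e. k_i ≥ (1−β)·k_j for all i, j ∈ {1,…,n}. If S ⊊ {1,…,n} satisfies Σ_{i∈S} c_i ≤ B and Σ_{i∈S} c_i + c_j > B for every j ∈ {1,…,n}∖S (i.e. S is a maximal feasible set), then 1 − β/(1−β) ≤ d(S) ≤ 1 + β/(1−β). -/

import Mathlib

open Finset

/-- relative cost bounds for a maximal feasible set under β-regular costs: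
`1 − β/(1−β) ≤ d(S) ≤ 1 + β/(1−β)`. -/
theorem stmt13 {n : ℕ} (B β : ℝ) (hB : 0 < B) (hβ0 : 0 ≤ β) (hβ1 : β < 1)
    (c : Fin n → ℝ) (hc : ∀ i, 0 < c i) (hcB : ∀ i, c i ≤ B)
    (k : Fin n → ℕ) (hk : ∀ i, k i = ⌊B / c i⌋₊)
    (hreg : ∀ i j : Fin n, (1 - β) * (k j : ℝ) ≤ (k i : ℝ))
    (S : Finset (Fin n)) (hSproper : S ⊂ Finset.univ)
    (hfeas : ∑ i ∈ S, c i ≤ B)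
    (hmax : ∀ j : Fin n, j ∉ S → B < (∑ i ∈ S, c i) + c j) :
    1 - β / (1 - β) ≤ ∑ i ∈ S, ((k i : ℝ))⁻¹ ∧
      ∑ i ∈ S, ((k i : ℝ))⁻¹ ≤ 1 + β / (1 - β) := by
  have hb1 : (0:ℝ) < 1 - β := by linarith
  obtain ⟨j, hjS⟩ : ∃ j, j ∉ S := by
    obtain ⟨j, hj⟩ := Finset.exists_of_ssubset hSproper
    exact ⟨j, hj.2⟩
  -- each k i ≥ 1
  have hone : ∀ i, 1 ≤ k i := by
    intro i
    rw [hk i]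
    apply Nat.le_floor
    rw [Nat.cast_one]
    exact (one_le_div (hc i)).mpr (hcB i)
  have hkpos : ∀ i, (0:ℝ) < k i := by
    intro i; exact_mod_cast Nat.lt_of_lt_of_le Nat.zero_lt_one (hone i)
  -- c i * k i ≤ B
  have hcle : ∀ i, c i * (k i : ℝ) ≤ B := by
    intro i
    have h1 : (k i : ℝ) ≤ B / c i := by
      rw [hk i]; exact Nat.floor_le (le_of_lt (div_pos hB (hc i)))
    have h2 := mul_le_mul_of_nonneg_left h1 (le_of_lt (hc i))
    rwa [mul_div_cancel₀ _ (ne_of_gt (hc i))] at h2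
  -- B < c i * (k i + 1)
  have hcgt : ∀ i, B < c i * ((k i : ℝ) + 1) := by
    intro i
    have h1 : B / c i < (k i : ℝ) + 1 := by
      rw [hk i]; exact Nat.lt_floor_add_one (B / c i)
    have h2 := mul_lt_mul_of_pos_left h1 (hc i)
    rwa [mul_div_cancel₀ _ (ne_of_gt (hc i))] at h2
  -- S nonempty
  have hSne : S.Nonempty := by
    rcases S.eq_empty_or_nonempty with h | h
    · exfalso
      have := hmax j hjS
      rw [h, Finset.sum_empty, zero_add] at this
      exact absurd (hcB j) (not_le.mpr this)
    · exact h
  -- max and min of k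
  obtain ⟨a, -, ha⟩ := Finset.exists_max_image (univ : Finset (Fin n)) k ⟨j, mem_univ j⟩
  obtain ⟨b, -, hbmin⟩ := Finset.exists_min_image (univ : Finset (Fin n)) k ⟨j, mem_univ j⟩
  have haR : ∀ i, (k i : ℝ) ≤ k a := fun i => by exact_mod_cast ha i (mem_univ i)
  have hbR : ∀ i, (k b : ℝ) ≤ k i := fun i => by exact_mod_cast hbmin i (mem_univ i)
  -- card bound : S.card ≤ k a
  have hcard_le : (S.card : ℝ) ≤ k a := by
    have h1 : ∑ i ∈ S, (B / ((k a : ℝ) + 1)) < ∑ i ∈ S, c i := by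
      apply Finset.sum_lt_sum_of_nonempty hSne
      intro i _
      rw [div_lt_iff₀ (by positivity)]
      have h2 := hcgt i
      have h3 : c i * ((k i : ℝ) + 1) ≤ c i * ((k a : ℝ) + 1) :=
        mul_le_mul_of_nonneg_left (by linarith [haR i]) (le_of_lt (hc i))
      linarith
    rw [Finset.sum_const, nsmul_eq_mul] at h1
    have h4 : (S.card : ℝ) * (B / ((k a : ℝ) + 1)) < B := lt_of_lt_of_le h1 hfeas
    have hX : (0:ℝ) < (k a : ℝ) + 1 := by positivity
    have h5 := mul_lt_mul_of_pos_right h4 hX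
    rw [mul_assoc, div_mul_cancel₀ _ (ne_of_gt hX)] at h5
    have h6 : (S.card : ℝ) < (k a : ℝ) + 1 := by nlinarith [h5, hB]
    have h7 : S.card < k a + 1 := by exact_mod_cast h6
    exact_mod_cast Nat.lt_succ_iff.mp h7
  -- d(S) ≤ card * (k b)⁻¹
  have hdub : ∑ i ∈ S, ((k i : ℝ))⁻¹ ≤ (S.card : ℝ) * ((k b : ℝ))⁻¹ := by
    rw [← nsmul_eq_mul, ← Finset.sum_const]
    apply Finset.sum_le_sum
    intro i _
    exact inv_anti₀ (hkpos b) (hbR i)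
  -- d(S) ≥ card * (k a)⁻¹
  have hdlb : (S.card : ℝ) * ((k a : ℝ))⁻¹ ≤ ∑ i ∈ S, ((k i : ℝ))⁻¹ := by
    rw [← nsmul_eq_mul, ← Finset.sum_const]
    apply Finset.sum_le_sum
    intro i _
    exact inv_anti₀ (hkpos i) (haR i)
  have hregba : (1 - β) * (k a : ℝ) ≤ k b := hreg b a
  constructor
  · -- lower bound
    -- 1 < d(S) + (k j)⁻¹
    have h1 : 1 < (∑ i ∈ S, ((k i : ℝ))⁻¹) + ((k j : ℝ))⁻¹ := by
      have h2 : B < ∑ i ∈ S, B * ((k i : ℝ))⁻¹ + B * ((k j : ℝ))⁻¹ := by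
        have h3 : ∀ i : Fin n, c i ≤ B * ((k i : ℝ))⁻¹ := by
          intro i
          rw [le_mul_inv_iff₀ (hkpos i)]
          linarith [hcle i]
        calc B < (∑ i ∈ S, c i) + c j := hmax j hjS
          _ ≤ ∑ i ∈ S, B * ((k i : ℝ))⁻¹ + B * ((k j : ℝ))⁻¹ :=
            add_le_add (Finset.sum_le_sum fun i _ => h3 i) (h3 j)
      rw [← Finset.mul_sum, ← mul_add] at h2
      nlinarith [h2, hB]
    -- so (k b) ≤ card
    have h4 : (k b : ℝ) ≤ S.card := by
      have h5 : (∑ i ∈ S, ((k i : ℝ))⁻¹) + ((k j : ℝ))⁻¹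
          ≤ ((S.card : ℝ) + 1) * ((k b : ℝ))⁻¹ := by
        rw [add_mul, one_mul]
        exact add_le_add hdub (inv_anti₀ (hkpos b) (hbR j))
      have h6 : 1 < ((S.card : ℝ) + 1) * ((k b : ℝ))⁻¹ := lt_of_lt_of_le h1 h5
      have h7 := mul_lt_mul_of_pos_right h6 (hkpos b)
      rw [one_mul, mul_assoc, inv_mul_cancel₀ (ne_of_gt (hkpos b)), mul_one] at h7
      have h8 : k b < S.card + 1 := by exact_mod_cast h7
      exact_mod_cast Nat.lt_succ_iff.mp h8
    -- d(S) ≥ (k b)/(k a) ≥ 1 - β ≥ 1 - β/(1-β)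
    have h9 : (k b : ℝ) * ((k a : ℝ))⁻¹ ≤ ∑ i ∈ S, ((k i : ℝ))⁻¹ :=
      le_trans (mul_le_mul_of_nonneg_right h4 (le_of_lt (inv_pos.mpr (hkpos a)))) hdlb
    have h10 : 1 - β ≤ (k b : ℝ) * ((k a : ℝ))⁻¹ := by
      rw [← div_eq_mul_inv, le_div_iff₀ (hkpos a)]
      linarith
    have h11 : β ≤ β / (1 - β) := by
      rw [le_div_iff₀ hb1]
      nlinarith
    linarith
  · -- upper bound
    have h1 : (S.card : ℝ) * ((k b : ℝ))⁻¹ ≤ (k a : ℝ) * ((k b : ℝ))⁻¹ :=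
      mul_le_mul_of_nonneg_right hcard_le (le_of_lt (inv_pos.mpr (hkpos b)))
    have h2 : (k a : ℝ) * ((k b : ℝ))⁻¹ ≤ 1 / (1 - β) := by
      rw [← div_eq_mul_inv, div_le_div_iff₀ (hkpos b) hb1]
      linarith
    have h3 : 1 / (1 - β) = 1 + β / (1 - β) := by
      field_simp
      ring
    linarith [hdub]
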